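/- Let U⊆E_{≤p−1}. Then the minimum spanning tree weight after removing U satisfies val(U) = (σ(E_{−1}∖U) − 1) + Σ_{i=0}^{p−1} 2^i · (σ(E_{≤i}∖U) − 1). -/

import Mathlib

namespace MSTInterdiction

/-- A finite undirected loopless multigraph on vertex type `V` with edge type `E`:
each edge has two distinct endpoints (parallel edges allowed). -/
structure Multigraph (V : Type*) (E : Type*) where
  fst : E → V
  snd : E → V
  loopless : ∀ e, fst e ≠ snd e

variable {V E : Type*}

/-- Adjacency relation using only the edges in `U`. -/
def Multigraph.rel (G : Multigraph V E) (U : Set E) (x y : V) : Prop :=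
  ∃ e ∈ U, (G.fst e = x ∧ G.snd e = y) ∨ (G.fst e = y ∧ G.snd e = x)

/-- The graph `(V, U)` is connected. -/
def Multigraph.Connects (G : Multigraph V E) (U : Set E) : Prop :=
  ∀ x y : V, Relation.EqvGen (G.rel U) x y

/-- `σ(U)`: the number of connected components of `(V, U)`. -/
noncomputable def Multigraph.sigma (G : Multigraph V E) (U : Set E) : ℕ :=
  Nat.card (Quotient (Relation.EqvGen.setoid (G.rel U)))

/-- Total cost (or weight) of a set of edges. -/
noncomputable def setSum (c : E → ℕ) (U : Set E) : ℕ := ∑ᶠ e ∈ U, c e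

/-- `val(U)`: the weight of a minimum spanning tree of `(V, E ∖ U)`, i.e. the minimum
of `∑_{e ∈ T} w e` over `T ⊆ E ∖ U` with `(V, T)` connected. -/
noncomputable def Multigraph.val (G : Multigraph V E) (w : E → ℕ) (U : Set E) : ℕ :=
  sInf {n | ∃ T : Set E, T ⊆ Uᶜ ∧ G.Connects T ∧ setSum w T = n}

/-- `E_{≤ i}`: edges of weight `0` or of weight `2^ℓ` for some natural `ℓ ≤ i`.
In particular `Ele w (-1) = E_{-1}` is the set of edges of weight `0`. -/
def Ele (w : E → ℕ) (i : ℤ) : Set E :=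
  {e | w e = 0 ∨ ∃ ℓ : ℕ, (ℓ : ℤ) ≤ i ∧ w e = 2 ^ ℓ}

/-- The connected component of vertex `v` in the graph `(V, S)`. -/
def Multigraph.component (G : Multigraph V E) (S : Set E) (v : V) : Set V :=
  {u | Relation.EqvGen (G.rel S) v u}

/-- The partition of `V` into the connected components of `(V, S)`. -/
def Multigraph.parts (G : Multigraph V E) (S : Set E) : Set (Set V) :=
  {A | ∃ v : V, A = G.component S v}

/-- Edge `e` has exactly one endpoint in `A`. -/
def Multigraph.oneEnd (G : Multigraph V E) (A : Set V) (e : E) : Prop :=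
  (G.fst e ∈ A ∧ G.snd e ∉ A) ∨ (G.fst e ∉ A ∧ G.snd e ∈ A)

/-- Edge `e` has both endpoints in `A`. -/
def Multigraph.twoEnds (G : Multigraph V E) (A : Set V) (e : E) : Prop :=
  G.fst e ∈ A ∧ G.snd e ∈ A


lemma rel_mono (G : Multigraph V E) {S S' : Set E} (h : S ⊆ S') {x y : V}
    (hr : G.rel S x y) : G.rel S' x y := by
  obtain ⟨e, he, hee⟩ := hr; exact ⟨e, h he, hee⟩
lemma eqv_mono (G : Multigraph V E) {S S' : Set E} (h : S ⊆ S') {x y : V}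
    (hr : Relation.EqvGen (G.rel S) x y) : Relation.EqvGen (G.rel S') x y :=
  Relation.EqvGen.mono (fun _ _ hh => rel_mono G h hh) _ _ hr


noncomputable def qmap (G : Multigraph V E) {S S' : Set E} (h : S ⊆ S') :
    Quotient (Relation.EqvGen.setoid (G.rel S)) → Quotient (Relation.EqvGen.setoid (G.rel S')) :=
  Quotient.lift (fun x => Quotient.mk (Relation.EqvGen.setoid (G.rel S')) x)
    (fun _ _ hab => Quotient.sound (eqv_mono G h hab))

lemma qmap_mk (G : Multigraph V E) {S S' : Set E} (h : S ⊆ S') (x : V) :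
    qmap G h (Quotient.mk _ x) = Quotient.mk _ x := rfl

lemma qmap_surjective (G : Multigraph V E) {S S' : Set E} (h : S ⊆ S') :
    Function.Surjective (qmap G h) := by
  intro c; induction c using Quotient.ind with
  | _ x => exact ⟨Quotient.mk _ x, rfl⟩

lemma sigma_mono (G : Multigraph V E) [Finite V] {S S' : Set E} (h : S ⊆ S') :
    G.sigma S' ≤ G.sigma S :=
  Nat.card_le_card_of_surjective _ (qmap_surjective G h)

lemma sigma_pos (G : Multigraph V E) [Finite V] [Nonempty V] (S : Set E) : 1 ≤ G.sigma S := by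
  have : Nonempty (Quotient (Relation.EqvGen.setoid (G.rel S))) :=
    ⟨Quotient.mk _ Classical.ofNonempty⟩
  exact Nat.card_pos

lemma sigma_eq_of_eqv_iff (G : Multigraph V E) {S S' : Set E}
    (h : ∀ x y, Relation.EqvGen (G.rel S) x y ↔ Relation.EqvGen (G.rel S') x y) :
    G.sigma S = G.sigma S' := by
  have : Relation.EqvGen.setoid (G.rel S) = Relation.EqvGen.setoid (G.rel S') := by
    apply Setoid.ext; intro a b; exact h a b
  unfold Multigraph.sigma; rw [this]

lemma eqv_insert_cases (G : Multigraph V E) {S : Set E} {e : E} {x y : V}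
    (h : Relation.EqvGen (G.rel (insert e S)) x y) :
    Relation.EqvGen (G.rel S) x y ∨
      ((Relation.EqvGen (G.rel S) x (G.fst e) ∨ Relation.EqvGen (G.rel S) x (G.snd e)) ∧
       (Relation.EqvGen (G.rel S) y (G.fst e) ∨ Relation.EqvGen (G.rel S) y (G.snd e))) := by
  induction h with
  | rel a b hab =>
    obtain ⟨e', he', hor⟩ := hab
    rcases he' with he' | he'
    · subst he'
      right
      rcases hor with ⟨h1, h2⟩ | ⟨h1, h2⟩
      · exact ⟨Or.inl (h1 ▸ Relation.EqvGen.refl _), Or.inr (h2 ▸ Relation.EqvGen.refl _)⟩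
      · exact ⟨Or.inr (h2 ▸ Relation.EqvGen.refl _), Or.inl (h1 ▸ Relation.EqvGen.refl _)⟩
    · exact Or.inl (Relation.EqvGen.rel _ _ ⟨e', he', hor⟩)
  | refl a => exact Or.inl (Relation.EqvGen.refl _)
  | symm a b _ ih =>
    rcases ih with ih | ⟨h1, h2⟩
    · exact Or.inl (Relation.EqvGen.symm _ _ ih)
    · exact Or.inr ⟨h2, h1⟩
  | trans a b c _ _ ih1 ih2 =>
    rcases ih1 with ih1 | ⟨ha, hb⟩
    · rcases ih2 with ih2 | ⟨hb, hc⟩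
      · exact Or.inl (Relation.EqvGen.trans _ _ _ ih1 ih2)
      · refine Or.inr ⟨?_, hc⟩
        rcases hb with hb | hb
        · exact Or.inl (Relation.EqvGen.trans _ _ _ ih1 hb)
        · exact Or.inr (Relation.EqvGen.trans _ _ _ ih1 hb)
    · rcases ih2 with ih2 | ⟨hb', hc⟩
      · refine Or.inr ⟨ha, ?_⟩
        rcases hb with hb | hb
        · exact Or.inl (Relation.EqvGen.trans _ _ _ (Relation.EqvGen.symm _ _ ih2) hb)
        · exact Or.inr (Relation.EqvGen.trans _ _ _ (Relation.EqvGen.symm _ _ ih2) hb)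
      · exact Or.inr ⟨ha, hc⟩

lemma eqv_insert_of_rel (G : Multigraph V E) {S : Set E} {e : E}
    (h : Relation.EqvGen (G.rel S) (G.fst e) (G.snd e)) (x y : V) :
    Relation.EqvGen (G.rel (insert e S)) x y ↔ Relation.EqvGen (G.rel S) x y := by
  constructor
  · intro hxy
    rcases eqv_insert_cases G hxy with h1 | ⟨hx, hy⟩
    · exact h1
    · have hx' : Relation.EqvGen (G.rel S) x (G.fst e) := by
        rcases hx with hx | hx
        · exact hx
        · exact Relation.EqvGen.trans _ _ _ hx (Relation.EqvGen.symm _ _ h)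
      have hy' : Relation.EqvGen (G.rel S) y (G.fst e) := by
        rcases hy with hy | hy
        · exact hy
        · exact Relation.EqvGen.trans _ _ _ hy (Relation.EqvGen.symm _ _ h)
      exact Relation.EqvGen.trans _ _ _ hx' (Relation.EqvGen.symm _ _ hy')
  · exact eqv_mono G (Set.subset_insert e S)

lemma sigma_insert_of_not_rel (G : Multigraph V E) [Finite V] {S : Set E} {e : E}
    (h : ¬ Relation.EqvGen (G.rel S) (G.fst e) (G.snd e)) :
    G.sigma S = G.sigma (insert e S) + 1 := by
  classical
  set s1 := Relation.EqvGen.setoid (G.rel S) with hs1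
  set s2 := Relation.EqvGen.setoid (G.rel (insert e S)) with hs2
  have erel : Relation.EqvGen (G.rel (insert e S)) (G.fst e) (G.snd e) :=
    Relation.EqvGen.rel _ _ ⟨e, Set.mem_insert e S, Or.inl ⟨rfl, rfl⟩⟩
  set g : V → Quotient s1 := fun x =>
    if Relation.EqvGen (G.rel S) x (G.snd e) then Quotient.mk s1 (G.fst e)
    else Quotient.mk s1 x with hg
  have gb : g (G.snd e) = Quotient.mk s1 (G.fst e) := by
    simp [hg, Relation.EqvGen.refl]
  have gval_a : ∀ x, Relation.EqvGen (G.rel S) x (G.fst e) ∨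
      Relation.EqvGen (G.rel S) x (G.snd e) → g x = Quotient.mk s1 (G.fst e) := by
    intro x hx
    rcases hx with hx | hx
    · have hxb : ¬ Relation.EqvGen (G.rel S) x (G.snd e) := fun hh =>
        h (Relation.EqvGen.trans _ _ _ (Relation.EqvGen.symm _ _ hx) hh)
      simp only [hg, if_neg hxb]
      exact Quotient.sound hx
    · simp only [hg, if_pos hx]
  have hresp : ∀ x y, Relation.EqvGen (G.rel (insert e S)) x y → g x = g y := by
    intro x y hxy
    rcases eqv_insert_cases G hxy with h1 | ⟨hx, hy⟩
    · by_cases hxb : Relation.EqvGen (G.rel S) x (G.snd e)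
      · have hyb : Relation.EqvGen (G.rel S) y (G.snd e) :=
          Relation.EqvGen.trans _ _ _ (Relation.EqvGen.symm _ _ h1) hxb
        simp only [hg, if_pos hxb, if_pos hyb]
      · have hyb : ¬ Relation.EqvGen (G.rel S) y (G.snd e) := fun hh =>
          hxb (Relation.EqvGen.trans _ _ _ h1 hh)
        simp only [hg, if_neg hxb, if_neg hyb]
        exact Quotient.sound h1
    · rw [gval_a x hx, gval_a y hy]
  set G' : Quotient s2 → Quotient s1 := Quotient.lift g (fun x y hh => hresp x y hh) with hG'
  set H : Quotient s2 ⊕ Unit → Quotient s1 :=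
    Sum.elim G' (fun _ => Quotient.mk s1 (G.snd e)) with hH
  have Gmk : ∀ x : V, G' (Quotient.mk s2 x) = g x := fun x => rfl
  have hGne : ∀ c, G' c ≠ Quotient.mk s1 (G.snd e) := by
    intro c
    induction c using Quotient.ind with
    | _ x =>
      rw [Gmk]
      by_cases hxb : Relation.EqvGen (G.rel S) x (G.snd e)
      · simp only [hg, if_pos hxb]
        intro hc
        exact h (Quotient.exact hc)
      · simp only [hg, if_neg hxb]
        intro hc
        exact hxb (Quotient.exact hc)
  have hGinj : Function.Injective G' := by
    intro c d hcd
    induction c using Quotient.ind with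
    | _ x =>
    induction d using Quotient.ind with
    | _ y =>
      rw [Gmk, Gmk] at hcd
      apply Quotient.sound
      show Relation.EqvGen (G.rel (insert e S)) x y
      by_cases hxb : Relation.EqvGen (G.rel S) x (G.snd e) <;>
        by_cases hyb : Relation.EqvGen (G.rel S) y (G.snd e)
      · exact Relation.EqvGen.trans _ _ _ (eqv_mono G (Set.subset_insert e S) hxb)
          (Relation.EqvGen.symm _ _ (eqv_mono G (Set.subset_insert e S) hyb))
      · simp only [hg, if_pos hxb, if_neg hyb] at hcd
        have : Relation.EqvGen (G.rel S) (G.fst e) y := Quotient.exact hcd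
        exact Relation.EqvGen.trans _ _ _ (eqv_mono G (Set.subset_insert e S) hxb)
          (Relation.EqvGen.trans _ _ _ (Relation.EqvGen.symm _ _ erel)
            (eqv_mono G (Set.subset_insert e S) this))
      · simp only [hg, if_neg hxb, if_pos hyb] at hcd
        have : Relation.EqvGen (G.rel S) x (G.fst e) := Quotient.exact hcd
        exact Relation.EqvGen.trans _ _ _ (eqv_mono G (Set.subset_insert e S) this)
          (Relation.EqvGen.trans _ _ _ erel
            (Relation.EqvGen.symm _ _ (eqv_mono G (Set.subset_insert e S) hyb)))
      · simp only [hg, if_neg hxb, if_neg hyb] at hcd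
        exact eqv_mono G (Set.subset_insert e S) (Quotient.exact hcd)
  have hinj : Function.Injective H := by
    intro c d hcd
    rcases c with c | u <;> rcases d with d | u'
    · simp only [hH, Sum.elim_inl] at hcd
      rw [hGinj hcd]
    · exact absurd hcd (hGne c)
    · exact absurd hcd.symm (hGne d)
    · rfl
  have hsurj : Function.Surjective H := by
    intro q
    induction q using Quotient.ind with
    | _ x =>
      by_cases hxb : Relation.EqvGen (G.rel S) x (G.snd e)
      · exact ⟨Sum.inr (), (Quotient.sound hxb).symm⟩
      · refine ⟨Sum.inl (Quotient.mk s2 x), ?_⟩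
        simp only [hH, Sum.elim_inl, Gmk, hg, if_neg hxb]
  have hcard := Nat.card_eq_of_bijective H ⟨hinj, hsurj⟩
  rw [Nat.card_sum] at hcard
  simp only [Nat.card_unique] at hcard
  show Nat.card (Quotient s1) = Nat.card (Quotient s2) + 1
  omega

lemma sigma_insert_ge (G : Multigraph V E) [Finite V] (S : Set E) (e : E) :
    G.sigma S ≤ G.sigma (insert e S) + 1 := by
  by_cases h : Relation.EqvGen (G.rel S) (G.fst e) (G.snd e)
  · have := sigma_eq_of_eqv_iff G (S := insert e S) (S' := S) (eqv_insert_of_rel G h)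
    omega
  · exact (sigma_insert_of_not_rel G h).le

/-- Adding finitely many edges decreases the component count by at most their number. -/
lemma sigma_le_sigma_union_add (G : Multigraph V E) [Finite V] [Finite E]
    (S B : Set E) : G.sigma S ≤ G.sigma (S ∪ B) + B.ncard := by
  classical
  have aux : ∀ b : Finset E, G.sigma S ≤ G.sigma (S ∪ ↑b) + b.card := by
    intro b
    induction b using Finset.induction_on with
    | empty => simp
    | @insert e b heb ih =>
      have h2 : G.sigma (S ∪ ↑b) ≤ G.sigma (insert e (S ∪ ↑b)) + 1 := sigma_insert_ge G _ e
      have h3 : insert e (S ∪ ↑b) = S ∪ ↑(insert e b) := by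
        rw [Finset.coe_insert, Set.union_insert]
      rw [Finset.card_insert_of_notMem heb]
      rw [h3] at h2
      omega
  have hBf : B.Finite := Set.toFinite B
  have := aux hBf.toFinset
  rw [Set.Finite.coe_toFinset] at this
  rwa [Set.ncard_eq_toFinset_card B hBf]

lemma connects_sigma_eq_one (G : Multigraph V E) [Finite V] [Nonempty V] {S : Set E}
    (h : ∀ x y : V, Relation.EqvGen (G.rel S) x y) : G.sigma S = 1 := by
  refine Nat.card_eq_one_iff_unique.2 ⟨⟨fun c d => ?_⟩, ⟨Quotient.mk _ Classical.ofNonempty⟩⟩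
  induction c using Quotient.ind with
  | _ x =>
  induction d using Quotient.ind with
  | _ y => exact Quotient.sound (h x y)

lemma exists_new_edge (G : Multigraph V E) {S S' : Set E} {x y : V}
    (hxy : Relation.EqvGen (G.rel S') x y) (hnot : ¬ Relation.EqvGen (G.rel S) x y) :
    ∃ e ∈ S', ¬ Relation.EqvGen (G.rel S) (G.fst e) (G.snd e) := by
  classical
  by_contra hcon
  push_neg at hcon
  apply hnot
  clear hnot
  induction hxy with
  | rel a b hab =>
    obtain ⟨e, he, hor⟩ := hab
    have := hcon e he
    rcases hor with ⟨h1, h2⟩ | ⟨h1, h2⟩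
    · exact h1 ▸ h2 ▸ this
    · exact h1 ▸ h2 ▸ (Relation.EqvGen.symm _ _ this)
  | refl a => exact Relation.EqvGen.refl _
  | symm a b _ ih => exact Relation.EqvGen.symm _ _ ih
  | trans a b c _ _ ih1 ih2 => exact Relation.EqvGen.trans _ _ _ ih1 ih2

/-- Forest extension. -/
lemma exists_forest (G : Multigraph V E) [Finite V] [Finite E] [Nonempty V] :
    ∀ (k : ℕ) (S S' : Set E), G.sigma S = k → S ⊆ S' →
    ∃ F : Set E, F ⊆ S' ∧
      (∀ e ∈ F, ¬ Relation.EqvGen (G.rel S) (G.fst e) (G.snd e)) ∧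
      (∀ x y, Relation.EqvGen (G.rel (S ∪ F)) x y ↔ Relation.EqvGen (G.rel S') x y) ∧
      F.ncard = G.sigma S - G.sigma S' := by
  intro k
  induction k using Nat.strong_induction_on with
  | _ k IH =>
    intro S S' hk hss
    by_cases hcov : ∀ x y, Relation.EqvGen (G.rel S') x y → Relation.EqvGen (G.rel S) x y
    · refine ⟨∅, Set.empty_subset _, by simp, ?_, ?_⟩
      · intro x y
        rw [Set.union_empty]
        exact ⟨eqv_mono G hss, hcov x y⟩
      · have : G.sigma S = G.sigma S' := sigma_eq_of_eqv_iff G fun x y =>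
          ⟨eqv_mono G hss, hcov x y⟩
        simp [this]
    · push_neg at hcov
      obtain ⟨x, y, hxy, hnot⟩ := hcov
      obtain ⟨e, heS', henew⟩ := exists_new_edge G hxy hnot
      have hdrop : G.sigma S = G.sigma (insert e S) + 1 := sigma_insert_of_not_rel G henew
      have hlt : G.sigma (insert e S) < k := by omega
      have hsub : insert e S ⊆ S' := Set.insert_subset heS' hss
      obtain ⟨F1, hF1sub, hF1new, hF1eqv, hF1card⟩ :=
        IH _ hlt (insert e S) S' rfl hsub
      have heF1 : e ∉ F1 := by
        intro hmem
        exact hF1new e hmem (Relation.EqvGen.rel _ _ ⟨e, Set.mem_insert e S, Or.inl ⟨rfl, rfl⟩⟩)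
      refine ⟨insert e F1, Set.insert_subset heS' hF1sub, ?_, ?_, ?_⟩
      · intro e' he'
        rcases he' with rfl | he'
        · exact henew
        · intro hrel
          exact hF1new e' he' (eqv_mono G (Set.subset_insert e S) hrel)
      · intro a b
        have heq : S ∪ insert e F1 = insert e S ∪ F1 := by
          rw [Set.union_insert, Set.insert_union]
        rw [heq]
        exact hF1eqv a b
      · have hmono : G.sigma S' ≤ G.sigma (insert e S) := sigma_mono G hsub
        rw [Set.ncard_insert_of_notMem heF1 (Set.toFinite F1), hF1card]
        omega

/-- Nested spanning forests along a chain of edge sets. -/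
lemma chain_forest (G : Multigraph V E) [Finite V] [Finite E] [Nonempty V]
    (c : ℕ → Set E) (hc : ∀ i, c i ⊆ c (i + 1)) :
    ∀ n : ℕ, ∃ T : Set E, T ⊆ c n ∧
      (∀ x y, Relation.EqvGen (G.rel T) x y ↔ Relation.EqvGen (G.rel (c n)) x y) ∧
      ∀ j ≤ n, (T \ c j).ncard = G.sigma (c j) - G.sigma (c n) := by
  have hmono : Monotone c := monotone_nat_of_le_succ hc
  intro n
  induction n with
  | zero =>
    obtain ⟨F, hFsub, _, hFeqv, _⟩ := exists_forest G (G.sigma ∅) ∅ (c 0) rfl (Set.empty_subset _)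
    refine ⟨F, hFsub, ?_, ?_⟩
    · intro x y
      have := hFeqv x y
      rwa [Set.empty_union] at this
    · intro j hj
      interval_cases j
      rw [Set.diff_eq_empty.2 hFsub]
      simp
  | succ n ih =>
    obtain ⟨T, hTsub, hTeqv, hTcard⟩ := ih
    have hTc : T ⊆ c (n + 1) := hTsub.trans (hc n)
    obtain ⟨F, hFsub, hFnew, hFeqv, hFcard⟩ :=
      exists_forest G (G.sigma T) T (c (n + 1)) rfl hTc
    have hsT : G.sigma T = G.sigma (c n) := sigma_eq_of_eqv_iff G hTeqv
    refine ⟨T ∪ F, Set.union_subset hTc hFsub, fun x y => hFeqv x y, ?_⟩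
    intro j hj
    rcases Nat.lt_or_ge j (n + 1) with hjn | hjn
    · have hjn' : j ≤ n := by omega
      -- F is disjoint from c j and from T
      have hFcj : F \ c j = F := by
        ext e
        refine ⟨fun he => he.1, fun heF => ⟨heF, fun hecj => ?_⟩⟩
        have : Relation.EqvGen (G.rel (c n)) (G.fst e) (G.snd e) :=
          Relation.EqvGen.rel _ _ ⟨e, hmono hjn' hecj, Or.inl ⟨rfl, rfl⟩⟩
        exact absurd ((hTeqv _ _).2 this) (hFnew e heF)
      have hdisj : Disjoint (T \ c j) F := by
        rw [Set.disjoint_left]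
        intro e heT heF
        have : Relation.EqvGen (G.rel T) (G.fst e) (G.snd e) :=
          Relation.EqvGen.rel _ _ ⟨e, heT.1, Or.inl ⟨rfl, rfl⟩⟩
        exact hFnew e heF this
      have hsplit : (T ∪ F) \ c j = (T \ c j) ∪ F := by
        rw [Set.union_diff_distrib, hFcj]
      rw [hsplit, Set.ncard_union_eq hdisj (Set.toFinite _) (Set.toFinite _),
        hTcard j hjn', hFcard, hsT]
      have h1 : G.sigma (c n) ≤ G.sigma (c j) := sigma_mono G (hmono hjn')
      have h2 : G.sigma (c (n + 1)) ≤ G.sigma (c n) := sigma_mono G (hc n)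
      omega
    · have : j = n + 1 := by omega
      subst this
      rw [Set.diff_eq_empty.2 (Set.union_subset hTc hFsub)]
      simp

lemma mem_Ele_pow {w : E → ℕ} {e : E} {j : ℕ} (hj : w e = 2 ^ j) (i : ℤ) :
    e ∈ Ele w i ↔ (j : ℤ) ≤ i := by
  constructor
  · rintro (h0 | ⟨ℓ, hℓ, hpow⟩)
    · rw [hj] at h0; exact absurd h0 (by positivity)
    · rw [hj] at hpow
      have : ℓ = j := (Nat.pow_right_injective le_rfl hpow.symm)
      omega
  · intro h
    exact Or.inr ⟨j, h, hj⟩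

lemma geo_sum (j : ℕ) : ∑ i ∈ Finset.range j, 2 ^ i = 2 ^ j - 1 := by
  induction j with
  | zero => simp
  | succ n ih =>
    rw [Finset.sum_range_succ, ih]
    have := Nat.one_le_two_pow (n := n)
    have h2 : (2:ℕ) ^ (n+1) = 2 * 2 ^ n := by ring
    omega

open Classical in
lemma weight_decomp {w : E → ℕ} {p : ℕ} (hw : ∀ e, w e = 0 ∨ ∃ i ≤ p, w e = 2 ^ i) (e : E) :
    w e = (if e ∈ Ele w (-1) then 0 else 1)
      + ∑ i ∈ Finset.range p, 2 ^ i * (if e ∈ Ele w (i : ℤ) then 0 else 1) := by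
  classical
  rcases hw e with h0 | ⟨j, hjp, hj⟩
  · have hm : ∀ i : ℤ, e ∈ Ele w i := fun i => Or.inl h0
    simp [hm, h0]
  · have hneg : e ∉ Ele w (-1) := by
      rw [mem_Ele_pow hj]; omega
    have hifs : ∀ i ∈ Finset.range p,
        2 ^ i * (if e ∈ Ele w (i : ℤ) then 0 else 1) = if i < j then 2 ^ i else 0 := by
      intro i _
      rw [mem_Ele_pow hj]
      by_cases hij : (j : ℤ) ≤ (i : ℤ)
      · rw [if_pos hij, if_neg (by omega)]; ring
      · rw [if_neg hij, if_pos (by omega)]; ring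
    rw [Finset.sum_congr rfl hifs, if_neg hneg]
    have hsum : ∑ i ∈ Finset.range p, (if i < j then 2 ^ i else 0) = ∑ i ∈ Finset.range j, 2 ^ i := by
      rw [← Finset.sum_filter]
      congr 1
      ext i
      simp only [Finset.mem_filter, Finset.mem_range]
      omega
    rw [hsum, geo_sum, hj]
    have := Nat.one_le_two_pow (n := j)
    omega

open Classical in
lemma ncard_diff_sum {T A : Set E} (t : Finset E) (ht : ↑t = T) :
    ∑ e ∈ t, (if e ∈ A then 0 else 1) = (T \ A).ncard := by
  classical
  have h1 : ∀ e ∈ t, (if e ∈ A then 0 else 1) = (if e ∉ A then 1 else 0) := by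
    intro e _; by_cases h : e ∈ A <;> simp [h]
  rw [Finset.sum_congr rfl h1, ← Finset.card_filter]
  have : ↑(t.filter (fun e => e ∉ A)) = T \ A := by
    ext e; simp [Finset.mem_filter, ← ht, Set.mem_diff]
  rw [← this, Set.ncard_coe_finset]

open Classical in
lemma setSum_decomp {w : E → ℕ} {p : ℕ} (hw : ∀ e, w e = 0 ∨ ∃ i ≤ p, w e = 2 ^ i)
    (T : Set E) (hT : T.Finite) :
    setSum w T = (T \ Ele w (-1)).ncard
      + ∑ i ∈ Finset.range p, 2 ^ i * (T \ Ele w (i : ℤ)).ncard := by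
  classical
  set t := hT.toFinset with htdef
  have hct : ↑t = T := hT.coe_toFinset
  have h0 : setSum w T = ∑ e ∈ t, w e := by
    rw [setSum, ← hct, finsum_mem_coe_finset]
  rw [h0, Finset.sum_congr rfl (fun e _ => weight_decomp hw e), Finset.sum_add_distrib,
    ncard_diff_sum t hct, Finset.sum_comm]
  congr 1
  refine Finset.sum_congr rfl fun i _ => ?_
  rw [← Finset.mul_sum, ncard_diff_sum t hct]

/-- For `U ⊆ E_{≤ p-1}`, the MST weight after removing `U` satisfies
`val(U) = (σ(E_{−1}∖U) − 1) + Σ_{i=0}^{p−1} 2^i (σ(E_{≤i}∖U) − 1)`. -/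
theorem mst_weight_level_formula
    [Fintype V] [Fintype E] [Nonempty V]
    (G : Multigraph V E) (w : E → ℕ) (p : ℕ) (hp : 1 ≤ p)
    (hw : ∀ e, w e = 0 ∨ ∃ i ≤ p, w e = 2 ^ i)
    (hEp : G.Connects {e | w e = 2 ^ p})
    (U : Set E) (hU : U ⊆ Ele w ((p : ℤ) - 1)) :
    (G.val w U : ℤ) =
      ((G.sigma (Ele w (-1) \ U) : ℤ) - 1)
        + ∑ i ∈ Finset.range p, (2 : ℤ) ^ i * ((G.sigma (Ele w (i : ℤ) \ U) : ℤ) - 1) := by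
  classical
  -- the chain of edge sets
  set c : ℕ → Set E := fun i => if i ≤ p then Ele w ((i : ℤ) - 1) \ U else Uᶜ with hcdef
  have hEle_mono : ∀ i j : ℤ, i ≤ j → Ele w i ⊆ Ele w j := by
    intro i j hij e he
    rcases he with h0 | ⟨ℓ, hℓ, hpow⟩
    · exact Or.inl h0
    · exact Or.inr ⟨ℓ, le_trans hℓ hij, hpow⟩
  have hchain : ∀ i, c i ⊆ c (i + 1) := by
    intro i
    by_cases h1 : i + 1 ≤ p
    · have h0 : i ≤ p := by omega
      simp only [hcdef, if_pos h1, if_pos h0]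
      exact Set.diff_subset_diff_left (hEle_mono _ _ (by push_cast; omega))
    · by_cases h0 : i ≤ p
      · simp only [hcdef, if_pos h0, if_neg h1]
        exact fun e he => he.2
      · simp only [hcdef, if_neg h0, if_neg h1]
        exact subset_rfl
  have hcp : c (p + 1) = Uᶜ := by simp only [hcdef, if_neg (by omega : ¬ p + 1 ≤ p)]
  have hc0 : c 0 = Ele w (-1) \ U := by
    simp only [hcdef, if_pos (by omega : 0 ≤ p)]
    norm_num
  have hci : ∀ i, i < p → c (i + 1) = Ele w (i : ℤ) \ U := by
    intro i hi
    simp only [hcdef, if_pos (by omega : i + 1 ≤ p)]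
    congr 2
    push_cast
    ring
  -- Uᶜ is connected
  have hUc : ∀ x y : V, Relation.EqvGen (G.rel Uᶜ) x y := by
    intro x y
    refine eqv_mono G ?_ (hEp x y)
    intro e he heU
    simp only [Set.mem_setOf_eq] at he
    rcases hU heU with h0 | ⟨ℓ, hℓ, hpow⟩
    · rw [he] at h0; exact absurd h0 (by positivity)
    · rw [he] at hpow
      have : p = ℓ := Nat.pow_right_injective le_rfl hpow
      omega
  have hsigUc : G.sigma Uᶜ = 1 := connects_sigma_eq_one G hUc
  -- the optimal tree T
  obtain ⟨T, hTsub, hTeqv, hTcard⟩ := chain_forest G c hchain (p + 1)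
  rw [hcp] at hTsub hTeqv
  have hTconn : ∀ x y : V, Relation.EqvGen (G.rel T) x y := fun x y => (hTeqv x y).2 (hUc x y)
  have hdiffU : ∀ (T' A : Set E), T' ⊆ Uᶜ → T' \ (A \ U) = T' \ A := by
    intro T' A hsub
    ext e
    simp only [Set.mem_diff]
    constructor
    · rintro ⟨heT, h⟩
      exact ⟨heT, fun heA => h ⟨heA, fun heU => (hsub heT) heU⟩⟩
    · rintro ⟨heT, h⟩
      exact ⟨heT, fun hh => h hh.1⟩
  have key : ∀ j, j ≤ p + 1 → (T \ c j).ncard = G.sigma (c j) - 1 := by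
    intro j hj
    rw [hTcard j hj, hcp, hsigUc]
  -- value of the tree T
  have hval : setSum w T = (G.sigma (Ele w (-1) \ U) - 1)
      + ∑ i ∈ Finset.range p, 2 ^ i * (G.sigma (Ele w (i : ℤ) \ U) - 1) := by
    rw [setSum_decomp hw T (Set.toFinite T)]
    congr 1
    · rw [← hdiffU T (Ele w (-1)) hTsub, ← hc0, key 0 (by omega), hc0]
    · refine Finset.sum_congr rfl fun i hi => ?_
      rw [Finset.mem_range] at hi
      rw [← hdiffU T (Ele w (i : ℤ)) hTsub, ← hci i hi, key (i + 1) (by omega), hci i hi]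
  -- lower bound for arbitrary admissible T'
  have hlb : ∀ T' : Set E, T' ⊆ Uᶜ → (∀ x y : V, Relation.EqvGen (G.rel T') x y) →
      ((G.sigma (Ele w (-1) \ U) : ℤ) - 1)
        + ∑ i ∈ Finset.range p, (2 : ℤ) ^ i * ((G.sigma (Ele w (i : ℤ) \ U) : ℤ) - 1)
      ≤ (setSum w T' : ℤ) := by
    intro T' hsub hconn
    have hbound : ∀ A : Set E, G.sigma (A \ U) ≤ 1 + (T' \ A).ncard := by
      intro A
      have h1 : G.sigma (A \ U) ≤ G.sigma (T' ∩ (A \ U)) :=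
        sigma_mono G Set.inter_subset_right
      have h2 := sigma_le_sigma_union_add G (T' ∩ (A \ U)) (T' \ (A \ U))
      rw [Set.inter_union_diff] at h2
      have h4 : G.sigma T' = 1 := connects_sigma_eq_one G hconn
      rw [h4, hdiffU T' A hsub] at h2
      omega
    rw [setSum_decomp hw T' (Set.toFinite T')]
    push_cast
    have hterm1 : ((G.sigma (Ele w (-1) \ U) : ℤ) - 1) ≤ ((T' \ Ele w (-1)).ncard : ℤ) := by
      have := hbound (Ele w (-1))
      have h2 : (G.sigma (Ele w (-1) \ U) : ℤ) ≤ 1 + ((T' \ Ele w (-1)).ncard : ℤ) := by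
        exact_mod_cast this
      omega
    refine add_le_add hterm1 (Finset.sum_le_sum fun i _ => ?_)
    have := hbound (Ele w (i : ℤ))
    have h2 : (G.sigma (Ele w (i : ℤ) \ U) : ℤ) ≤ 1 + ((T' \ Ele w (i : ℤ)).ncard : ℤ) := by
      exact_mod_cast this
    have h3 : ((G.sigma (Ele w (i : ℤ) \ U) : ℤ) - 1) ≤ ((T' \ Ele w (i : ℤ)).ncard : ℤ) := by
      omega
    exact mul_le_mul_of_nonneg_left h3 (by positivity)
  -- casting the value of T
  have hcast : ((setSum w T : ℕ) : ℤ) =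
      ((G.sigma (Ele w (-1) \ U) : ℤ) - 1)
        + ∑ i ∈ Finset.range p, (2 : ℤ) ^ i * ((G.sigma (Ele w (i : ℤ) \ U) : ℤ) - 1) := by
    rw [hval]
    rw [Nat.cast_add, Nat.cast_sum]
    congr 1
    · rw [Nat.cast_sub (sigma_pos G _)]
      norm_num
    · refine Finset.sum_congr rfl fun i _ => ?_
      rw [Nat.cast_mul, Nat.cast_sub (sigma_pos G _)]
      push_cast
      ring
  -- the sInf
  have hmem : setSum w T ∈ {n | ∃ T0 : Set E, T0 ⊆ Uᶜ ∧ G.Connects T0 ∧ setSum w T0 = n} :=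
    ⟨T, hTsub, hTconn, rfl⟩
  have hle : G.val w U ≤ setSum w T := Nat.sInf_le hmem
  obtain ⟨T0, hT0sub, hT0conn, hT0val⟩ := Nat.sInf_mem (⟨_, hmem⟩ :
    {n | ∃ T0 : Set E, T0 ⊆ Uᶜ ∧ G.Connects T0 ∧ setSum w T0 = n}.Nonempty)
  apply le_antisymm
  · calc (G.val w U : ℤ) ≤ (setSum w T : ℤ) := by exact_mod_cast hle
    _ = _ := hcast
  · have := hlb T0 hT0sub hT0conn
    rw [hT0val] at this
    exact this

end MSTInterdiction
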